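/- The community function C_scomp satisfies Monotonicity: if S ∈ C_scomp(V,Π) and Π' is a profile such that for all s,u ∈ S and v ∈ V, u ≻_{π_s} v implies u ≻_{π'_s} v, then S ∈ C_scomp(V,Π'). -/

import Mathlib

open Finset

variable {α : Type*} [DecidableEq α]

/-- `GroupPrefers r A B`: under ranking `r` (smaller rank = more preferred), the set `A`
is group-preferred to `B`: there is an injection `f` from `B` into `A` such that each
`f b` is strictly preferred to `b`.  (When `|A| = |B|` this is a bijection.) -/
def GroupPrefers (r : α → ℕ) (A B : Finset α) : Prop :=
  ∃ f : α → α, Set.InjOn f ↑B ∧ (∀ b ∈ B, f b ∈ A) ∧ ∀ b ∈ B, r (f b) < r b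

/-- The top-`k` elements of `A` under the ranking `r`. -/
def topk (r : α → ℕ) (k : ℕ) (A : Finset α) : Finset α :=
  A.filter fun a => (A.filter fun b => r b < r a).card < k

/-- `WeakPrefers r A B`: `r` weakly prefers `A` to `B`, i.e. with `k = min(|A|,|B|)`,
the top-`k` elements of `A` are group-preferred to the top-`k` elements of `B`
(and `A` is nonempty whenever `B` is). -/
def WeakPrefers (r : α → ℕ) (A B : Finset α) : Prop :=
  (B.Nonempty → A.Nonempty) ∧
  GroupPrefers r (topk r (min A.card B.card) A) (topk r (min A.card B.card) B)

/-- `P` is a preference profile on `V`: each individual's ranking is a total (strict)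
order on `V`, i.e. injective on `V`. -/
def IsProfile (V : Finset α) (P : α → α → ℕ) : Prop :=
  ∀ u ∈ V, Set.InjOn (P u) ↑V

/-- `S` is self-approving w.r.t. the profile `P` on `V`. -/
def SelfApproving (V : Finset α) (P : α → α → ℕ) (S : Finset α) : Prop :=
  ∀ S' ⊆ V \ S, S'.card = S.card → ∃ s ∈ S, ¬ GroupPrefers (P s) S' S

/-- `S` is group-stable w.r.t. the profile `P` on `V`. -/
def GroupStable (V : Finset α) (P : α → α → ℕ) (S : Finset α) : Prop :=
  ∀ G, G ⊂ S → G.Nonempty → ∀ G' ⊆ V \ S, G'.card = G.card →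
    ∃ s ∈ S \ G, ¬ GroupPrefers (P s) G' G

/-- `S` is strongly group-stable w.r.t. the profile `P` on `V`. -/
def StronglyGroupStable (V : Finset α) (P : α → α → ℕ) (S : Finset α) : Prop :=
  ∀ G, G ⊂ S → G.Nonempty → ∃ s ∈ S \ G, ¬ WeakPrefers (P s) (V \ S) G

/-- `s` ranks itself first (π_s(s) = 1). -/
def RanksSelfFirst (V : Finset α) (P : α → α → ℕ) (s : α) : Prop :=
  ∀ v ∈ V, v ≠ s → P s s < P s v

/-- Membership in `C_scomp`: strongly group-stable, and a singleton `{s}` must rank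
itself first. -/
def CscompMem (V : Finset α) (P : α → α → ℕ) (S : Finset α) : Prop :=
  S ⊆ V ∧ StronglyGroupStable V P S ∧ ∀ s, S = {s} → RanksSelfFirst V P s

/-- A (nonempty) clique of a preference network: every member prefers every member
to every non-member. -/
def IsClique (V : Finset α) (P : α → α → ℕ) (S : Finset α) : Prop :=
  S.Nonempty ∧ S ⊆ V ∧ ∀ u ∈ S, ∀ v ∈ S, ∀ w ∈ V \ S, P u v < P u w

/-- A community function maps each preference network `(V, P)` to a collection of
subsets of `V`. -/
abbrev CommunityFun (α : Type*) := Finset α → (α → α → ℕ) → Set (Finset α)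

/-- Axiom GS: every (nonempty) community is group-stable. -/
def SatisfiesGS (C : CommunityFun α) : Prop :=
  ∀ (V : Finset α) (P : α → α → ℕ), IsProfile V P →
    ∀ S ∈ C V P, S ⊆ V → S.Nonempty → GroupStable V P S

/-- Axiom SGS: every (nonempty) community is strongly group-stable. -/
def SatisfiesSGS (C : CommunityFun α) : Prop :=
  ∀ (V : Finset α) (P : α → α → ℕ), IsProfile V P →
    ∀ S ∈ C V P, S ⊆ V → S.Nonempty → StronglyGroupStable V P S

/-- Axiom SA: every (nonempty) community is self-approving. -/
def SatisfiesSA (C : CommunityFun α) : Prop :=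
  ∀ (V : Finset α) (P : α → α → ℕ), IsProfile V P →
    ∀ S ∈ C V P, S ⊆ V → S.Nonempty → SelfApproving V P S

/-- Axiom SA': every singleton community ranks itself first. -/
def SatisfiesSA' (C : CommunityFun α) : Prop :=
  ∀ (V : Finset α) (P : α → α → ℕ), IsProfile V P →
    ∀ s ∈ V, {s} ∈ C V P → RanksSelfFirst V P s

/-- Axiom Mon (monotonicity). -/
def SatisfiesMon (C : CommunityFun α) : Prop :=
  ∀ (V : Finset α) (P P' : α → α → ℕ), IsProfile V P → IsProfile V P' →
    ∀ S ⊆ V, (∀ s ∈ S, ∀ u ∈ S, ∀ v ∈ V, P s u < P s v → P' s u < P' s v) →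
      S ∈ C V P → S ∈ C V P'

/-- Axiom WC (world community). -/
def SatisfiesWC (C : CommunityFun α) : Prop :=
  ∀ (V : Finset α) (P : α → α → ℕ), IsProfile V P → V ∈ C V P

/-- Axiom A (anonymity). -/
def SatisfiesA (C : CommunityFun α) : Prop :=
  ∀ (V : Finset α) (P P' : α → α → ℕ) (σ : α ≃ α), IsProfile V P → IsProfile V P' →
    (∀ v ∈ V, σ v ∈ V) → (∀ u ∈ V, ∀ v ∈ V, P' (σ u) (σ v) = P u v) →
    ∀ S ⊆ V, (S ∈ C V P ↔ S.image σ ∈ C V P')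

/-- Axiom Emb (embedding). -/
def SatisfiesEmb (C : CommunityFun α) : Prop :=
  ∀ (V V' : Finset α) (P P' : α → α → ℕ), IsProfile V P → IsProfile V' P' → V' ⊆ V →
    (∀ u ∈ V', ∀ v ∈ V', ∀ w ∈ V', (P' u v < P' u w ↔ P u v < P u w)) →
    C V' P' = C V P ∩ {S : Finset α | S ⊆ V'}


/-- Auxiliary: the "number of strictly better elements" count is strictly monotone. -/
lemma cardBelow_lt_of_lt {r : α → ℕ} {A : Finset α} {a a' : α} (ha : a ∈ A)
    (h : r a < r a') :
    (A.filter fun b => r b < r a).card < (A.filter fun b => r b < r a').card := by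
  apply Finset.card_lt_card
  refine ⟨fun x hx => ?_, fun hsub => ?_⟩
  · simp only [Finset.mem_filter] at hx ⊢
    exact ⟨hx.1, hx.2.trans h⟩
  · have := hsub (Finset.mem_filter.2 ⟨ha, h⟩)
    simp only [Finset.mem_filter] at this
    omega

/-- Auxiliary: if `r` is injective on `A`, then `topk r k A` has at most `k` elements. -/
lemma topk_card_le {r : α → ℕ} {A : Finset α} {k : ℕ} (hinj : Set.InjOn r ↑A) :
    (topk r k A).card ≤ k := by
  classical
  have := Finset.card_le_card_of_injOn (fun a => (A.filter fun b => r b < r a).card)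
    (s := topk r k A) (t := Finset.range k)
    (fun a ha => by
      simp only [Finset.mem_coe, topk, Finset.coe_filter, Set.mem_setOf_eq, Finset.mem_filter] at ha
      exact Finset.mem_range.2 ha.2)
    (by
      intro a ha a' ha' h
      dsimp only at h
      simp only [Finset.coe_filter, Set.mem_setOf_eq, topk] at ha ha'
      by_contra hne
      have hr : r a ≠ r a' := fun h' => hne (hinj ha.1 ha'.1 h')
      rcases hr.lt_or_gt with hlt | hlt
      · have := cardBelow_lt_of_lt ha.1 hlt
        omega
      · have := cardBelow_lt_of_lt ha'.1 hlt
        omega)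
  simpa using this

/-- Auxiliary: `topk` only depends on the strict order induced by the ranking. -/
lemma topk_congr {r r' : α → ℕ} {A : Finset α} {k : ℕ}
    (h : ∀ a ∈ A, ∀ b ∈ A, (r b < r a ↔ r' b < r' a)) :
    topk r k A = topk r' k A := by
  unfold topk
  refine Finset.filter_congr fun a ha => ?_
  have : A.filter (fun b => r b < r a) = A.filter (fun b => r' b < r' a) :=
    Finset.filter_congr fun b hb => by simpa using h a ha b hb
  rw [this]

/-- Auxiliary key lemma: any dominating injection from `B` into `A` can be upgraded to
one landing inside the top-`k` elements of `A`, provided `|B| ≤ k`. -/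
lemma exists_inj_into_topk (r : α → ℕ) (A : Finset α) (k : ℕ) :
    ∀ n (B : Finset α), B.card ≤ k →
    ∀ f : α → α, (∑ b ∈ B, r (f b)) = n → Set.InjOn f ↑B → (∀ b ∈ B, f b ∈ A) →
    (∀ b ∈ B, r (f b) < r b) →
    ∃ g : α → α, Set.InjOn g ↑B ∧ (∀ b ∈ B, g b ∈ topk r k A) ∧ ∀ b ∈ B, r (g b) < r b := by
  intro n
  induction n using Nat.strong_induction_on with
  | _ n ih =>
    intro B hk f hsum hfi hfA hfr
    by_cases hall : ∀ b ∈ B, f b ∈ topk r k A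
    · exact ⟨f, hfi, hall, hfr⟩
    · push_neg at hall
      obtain ⟨b₀, hb₀, hnot⟩ := hall
      have hfb₀A : f b₀ ∈ A := hfA b₀ hb₀
      have hAcard : k ≤ (A.filter fun x => r x < r (f b₀)).card := by
        by_contra h
        exact hnot (Finset.mem_filter.2 ⟨hfb₀A, by omega⟩)
      set A₀ := A.filter fun x => r x < r (f b₀) with hA₀
      have hfb₀img : f b₀ ∈ B.image f := Finset.mem_image_of_mem f hb₀
      have hnsub : ¬ A₀ ⊆ B.image f := by
        intro hsub
        have h1 : (B.image f \ {f b₀}).card < (B.image f).card :=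
          Finset.card_lt_card (Finset.sdiff_ssubset (Finset.singleton_subset_iff.2 hfb₀img)
            (Finset.singleton_nonempty _))
        have h2 : A₀ ⊆ B.image f \ {f b₀} := by
          intro x hx
          refine Finset.mem_sdiff.2 ⟨hsub hx, ?_⟩
          simp only [Finset.mem_singleton]
          rintro rfl
          have := (Finset.mem_filter.1 hx).2
          omega
        have h3 := Finset.card_le_card h2
        have h4 := Finset.card_image_le (s := B) (f := f)
        omega
      obtain ⟨x, hxA₀, hximg⟩ := Finset.not_subset.1 hnsub
      have hxA : x ∈ A := (Finset.mem_filter.1 hxA₀).1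
      have hxlt : r x < r (f b₀) := (Finset.mem_filter.1 hxA₀).2
      set f' := Function.update f b₀ x with hf'
      have hval : ∀ b ∈ B, b ≠ b₀ → f' b = f b := by
        intro b _ hb
        simp [hf', Function.update_of_ne hb]
      have hval₀ : f' b₀ = x := by simp [hf']
      have hsum' : (∑ b ∈ B, r (f' b)) < n := by
        rw [← hsum]
        have h1 : (∑ b ∈ B, r (f' b)) = ∑ b ∈ B \ {b₀}, r (f b) + r x := by
          rw [Finset.sum_eq_sum_sdiff_singleton_add hb₀ (fun b => r (f' b)), hval₀]
          congr 1
          apply Finset.sum_congr rfl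
          intro b hb
          rw [hval b (Finset.mem_sdiff.1 hb).1 (by simpa using (Finset.mem_sdiff.1 hb).2)]
        have h2 : (∑ b ∈ B, r (f b)) = ∑ b ∈ B \ {b₀}, r (f b) + r (f b₀) :=
          Finset.sum_eq_sum_sdiff_singleton_add hb₀ (fun b => r (f b))
        omega
      have hfi' : Set.InjOn f' ↑B := by
        intro a ha a' ha' h
        simp only [Finset.coe_mem, Finset.mem_coe] at ha ha'
        by_cases h1 : a = b₀ <;> by_cases h2 : a' = b₀
        · rw [h1, h2]
        · exfalso
          rw [h1, hval₀, hval a' ha' h2] at h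
          exact hximg (h ▸ Finset.mem_image_of_mem f ha')
        · exfalso
          rw [h2, hval₀, hval a ha h1] at h
          exact hximg (h ▸ Finset.mem_image_of_mem f ha)
        · rw [hval a ha h1, hval a' ha' h2] at h
          exact hfi ha ha' h
      have hfA' : ∀ b ∈ B, f' b ∈ A := by
        intro b hb
        by_cases h1 : b = b₀
        · rw [h1, hval₀]; exact hxA
        · rw [hval b hb h1]; exact hfA b hb
      have hfr' : ∀ b ∈ B, r (f' b) < r b := by
        intro b hb
        by_cases h1 : b = b₀
        · rw [h1, hval₀]; exact hxlt.trans (hfr b₀ hb₀)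
        · rw [hval b hb h1]; exact hfr b hb
      exact ih _ hsum' B hk f' rfl hfi' hfA' hfr'

/-- `C_scomp` satisfies Monotonicity. -/
theorem stmt11 (V : Finset α) (P P' : α → α → ℕ) (S : Finset α)
    (hP : IsProfile V P) (hP' : IsProfile V P') (hSV : S ⊆ V)
    (hmem : CscompMem V P S)
    (hmono : ∀ s ∈ S, ∀ u ∈ S, ∀ v ∈ V, P s u < P s v → P' s u < P' s v) :
    CscompMem V P' S := by
  obtain ⟨hSV', hSGS, hsingle⟩ := hmem
  refine ⟨hSV', ?_, ?_⟩
  · -- strong group stability under P'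
    intro G hGS hGne
    obtain ⟨s, hs, hnwp⟩ := hSGS G hGS hGne
    have hsS : s ∈ S := (Finset.mem_sdiff.1 hs).1
    have hsV : s ∈ V := hSV hsS
    refine ⟨s, hs, fun hwp => hnwp ?_⟩
    -- transfer WeakPrefers (P' s) (V \ S) G  to  WeakPrefers (P s) (V \ S) G
    obtain ⟨hne, f, hfi, hfA, hfr⟩ := hwp
    set k := min (V \ S).card G.card with hkdef
    have hGsubS : G ⊆ S := hGS.subset
    have hGsubV : G ⊆ V := hGsubS.trans hSV
    -- order on S is preserved both ways
    have hiff : ∀ a ∈ S, ∀ b ∈ S, (P s b < P s a ↔ P' s b < P' s a) := by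
      intro a ha b hb
      constructor
      · exact fun h => hmono s hsS b hb a (hSV ha) h
      · intro h
        by_contra h'
        have hab : a ≠ b := by rintro rfl; omega
        have : P s a ≠ P s b := fun h'' => hab (hP s hsV (hSV ha) (hSV hb) h'')
        have h2 : P s a < P s b := by omega
        have := hmono s hsS a ha b (hSV hb) h2
        omega
    have htopkG : topk (P' s) k G = topk (P s) k G :=
      (topk_congr fun a ha b hb => hiff a (hGsubS ha) b (hGsubS hb)).symm
    -- dominance transfers from P' to P when the dominator is in V and dominated in S
    have hdom : ∀ u ∈ V, ∀ b ∈ S, P' s u < P' s b → P s u < P s b := by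
      intro u hu b hb h
      by_contra h'
      have hub : u ≠ b := fun h'' => by rw [h''] at h; omega
      have : P s u ≠ P s b := fun h'' => hub (hP s hsV hu (hSV hb) h'')
      have h2 : P s b < P s u := by omega
      have := hmono s hsS b hb u hu h2
      omega
    refine ⟨hne, ?_⟩
    -- f maps topk (P s) k G into V \ S, dominating under P s
    have hB : topk (P s) k G ⊆ G := Finset.filter_subset _ _
    have hfA' : ∀ b ∈ topk (P s) k G, f b ∈ V \ S := by
      intro b hb
      rw [← htopkG] at hb
      exact Finset.filter_subset _ _ (hfA b hb)
    have hfr' : ∀ b ∈ topk (P s) k G, P s (f b) < P s b := by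
      intro b hb
      have hbG : b ∈ G := hB hb
      rw [← htopkG] at hb
      exact hdom (f b) (Finset.mem_sdiff.1 (hfA' b (htopkG ▸ hb))).1 b (hGsubS hbG) (hfr b hb)
    have hfi' : Set.InjOn f ↑(topk (P s) k G) := by
      rw [← htopkG]; exact hfi
    have hcard : (topk (P s) k G).card ≤ k :=
      topk_card_le (Set.InjOn.mono (by exact_mod_cast hGsubV) (hP s hsV))
    exact exists_inj_into_topk (P s) (V \ S) k _ (topk (P s) k G) hcard f rfl
      hfi' hfA' hfr'
  · -- singleton ranks itself first under P'
    intro t ht v hv hvt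
    have htS : t ∈ S := ht ▸ Finset.mem_singleton_self t
    exact hmono t htS t htS v hv (hsingle t ht v hv hvt)
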